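/- For positive definite d×d matrices Σ₁, Σ₂, the Bures cost Trace(Σ₁ + Σ₂ − 2(Σ₁^{1/2} Σ₂ Σ₁^{1/2})^{1/2}) is nonnegative, and it equals 0 if and only if Σ₁ = Σ₂. -/

import Mathlib

open Matrix

open Classical in
noncomputable def msqrt {d : ℕ} (A : Matrix (Fin d) (Fin d) ℝ) : Matrix (Fin d) (Fin d) ℝ :=
  if h : A.PosSemidef then
    h.1.eigenvectorUnitary.1 * diagonal ((RCLike.ofReal : ℝ → ℝ) ∘ (√·) ∘ h.1.eigenvalues) *
      (star h.1.eigenvectorUnitary : Matrix (Fin d) (Fin d) ℝ)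
  else 0

noncomputable def Matrix.PosSemidef.sqrt {d : ℕ} {A : Matrix (Fin d) (Fin d) ℝ}
    (h : A.PosSemidef) : Matrix (Fin d) (Fin d) ℝ :=
  h.1.eigenvectorUnitary.1 * diagonal ((RCLike.ofReal : ℝ → ℝ) ∘ (√·) ∘ h.1.eigenvalues) *
    (star h.1.eigenvectorUnitary : Matrix (Fin d) (Fin d) ℝ)

open scoped MatrixOrder in
lemma Matrix.PosSemidef.sqrt_eq_cfc {d : ℕ} {A : Matrix (Fin d) (Fin d) ℝ}
    (h : A.PosSemidef) : h.sqrt = CFC.sqrt A := by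
  rw [CFC.sqrt_eq_cfc, cfc_nnreal_eq_real _ A h.nonneg, h.1.cfc_eq]
  simp only [IsHermitian.cfc, Unitary.conjStarAlgAut_apply, Matrix.PosSemidef.sqrt]
  congr 3
  funext i
  simp [Real.coe_sqrt, Real.coe_toNNReal', max_eq_left (h.eigenvalues_nonneg i)]

open scoped MatrixOrder in
lemma Matrix.PosSemidef.posSemidef_sqrt {d : ℕ} {A : Matrix (Fin d) (Fin d) ℝ}
    (h : A.PosSemidef) : h.sqrt.PosSemidef := by
  rw [h.sqrt_eq_cfc]
  exact (CFC.sqrt_nonneg A).posSemidef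

open scoped MatrixOrder in
lemma Matrix.PosSemidef.sqrt_mul_self {d : ℕ} {A : Matrix (Fin d) (Fin d) ℝ}
    (h : A.PosSemidef) : h.sqrt * h.sqrt = A := by
  rw [h.sqrt_eq_cfc]
  exact CFC.sqrt_mul_sqrt_self A h.nonneg

open scoped MatrixOrder in
lemma Matrix.PosSemidef.eq_of_sq_eq_sq {d : ℕ} {A B : Matrix (Fin d) (Fin d) ℝ}
    (hA : A.PosSemidef) (hB : B.PosSemidef) (h : A ^ 2 = B ^ 2) : A = B := by
  rw [← CFC.sqrt_sq A hA.nonneg, h, CFC.sqrt_sq B hB.nonneg]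

private lemma transpose_eq_of_herm {d : ℕ} {P : Matrix (Fin d) (Fin d) ℝ}
    (h : P.IsHermitian) : Pᵀ = P := by
  ext i j
  simpa using congrFun (congrFun h i) j

/-- The Bures cost is nonnegative and vanishes iff `Σ₁ = Σ₂`. -/
theorem bures_cost_nonneg_eq_zero_iff {d : ℕ}
    (S₁ S₂ : Matrix (Fin d) (Fin d) ℝ)
    (hS₁ : S₁.PosDef) (hS₂ : S₂.PosDef) :
    0 ≤ (S₁ + S₂ - (2 : ℝ) • msqrt (msqrt S₁ * S₂ * msqrt S₁)).trace ∧
      ((S₁ + S₂ - (2 : ℝ) • msqrt (msqrt S₁ * S₂ * msqrt S₁)).trace = 0 ↔ S₁ = S₂) := by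
  have hS₁p := hS₁.posSemidef
  have hS₂p := hS₂.posSemidef
  set A := hS₁p.sqrt with hAdef
  have hA : A.PosSemidef := hS₁p.posSemidef_sqrt
  have hAsq : A * A = S₁ := hS₁p.sqrt_mul_self
  set B := hS₂p.sqrt with hBdef
  have hB : B.PosSemidef := hS₂p.posSemidef_sqrt
  have hBsq : B * B = S₂ := hS₂p.sqrt_mul_self
  have hm1 : msqrt S₁ = A := by rw [msqrt, dif_pos hS₁p]; rfl
  have hAt : Aᵀ = A := transpose_eq_of_herm hA.1
  have hBt : Bᵀ = B := transpose_eq_of_herm hB.1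
  have hX : (A * S₂ * A).PosSemidef := by
    have := hS₂p.conjTranspose_mul_mul_same A
    simpa [conjTranspose_eq_transpose_of_trivial, hAt, Matrix.mul_assoc] using this
  set N := hX.sqrt with hNdef
  have hN : N.PosSemidef := hX.posSemidef_sqrt
  have hNt : Nᵀ = N := transpose_eq_of_herm hN.1
  have hNN : N * N = A * S₂ * A := hX.sqrt_mul_self
  have hm2 : msqrt (msqrt S₁ * S₂ * msqrt S₁) = N := by
    rw [hm1, msqrt, dif_pos hX]; rfl
  -- determinants
  have hdS₁ : S₁.det ≠ 0 := ne_of_gt hS₁.det_pos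
  have hdS₂ : S₂.det ≠ 0 := ne_of_gt hS₂.det_pos
  have hdA : A.det ≠ 0 := by
    intro h
    apply hdS₁
    rw [← hAsq, det_mul, h, mul_zero]
  have hdX : (A * S₂ * A).det ≠ 0 := by
    simp only [det_mul]
    exact mul_ne_zero (mul_ne_zero hdA hdS₂) hdA
  have hdN : N.det ≠ 0 := by
    intro h
    apply hdX
    rw [← hNN, det_mul, h, mul_zero]
  have hNinv : N * N⁻¹ = 1 := mul_nonsing_inv N (isUnit_iff_ne_zero.mpr hdN)
  have hNinv' : N⁻¹ * N = 1 := nonsing_inv_mul N (isUnit_iff_ne_zero.mpr hdN)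
  have hNinvT : N⁻¹ᵀ = N⁻¹ := by rw [transpose_nonsing_inv, hNt]
  -- polar: O = (B*A) * N⁻¹ is orthogonal, C = Oᵀ * B, C * A = N, Cᵀ * C = S₂
  set O := B * A * N⁻¹ with hOdef
  have hOt : Oᵀ = N⁻¹ * (A * B) := by
    rw [hOdef, transpose_mul, transpose_mul, hNinvT, hAt, hBt]
  have hMtM : (A * B) * (B * A) = N * N := by
    rw [hNN, ← hBsq]
    noncomm_ring
  have hOtO : Oᵀ * O = 1 := by
    rw [hOt, hOdef]
    calc N⁻¹ * (A * B) * (B * A * N⁻¹) = N⁻¹ * ((A * B) * (B * A)) * N⁻¹ := by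
          noncomm_ring
    _ = N⁻¹ * (N * N) * N⁻¹ := by rw [hMtM]
    _ = (N⁻¹ * N) * (N * N⁻¹) := by noncomm_ring
    _ = 1 := by rw [hNinv, hNinv', one_mul]
  have hOOt : O * Oᵀ = 1 := mul_eq_one_comm.mp hOtO
  set C := Oᵀ * B with hCdef
  have hCA : C * A = N := by
    have h1 : C * A = N⁻¹ * (A * B * (B * A)) := by rw [hCdef, hOt]; noncomm_ring
    rw [h1, hMtM, ← Matrix.mul_assoc, hNinv', one_mul]
  have hCtC : Cᵀ * C = S₂ := by
    rw [hCdef, transpose_mul, transpose_transpose, hBt]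
    calc B * O * (Oᵀ * B) = B * (O * Oᵀ) * B := by noncomm_ring
    _ = S₂ := by rw [hOOt, Matrix.mul_one, hBsq]
  -- Euclidean vectors
  set u : EuclideanSpace ℝ (Fin d × Fin d) :=
    (WithLp.equiv 2 _).symm (fun p => C p.1 p.2) with hu
  set v : EuclideanSpace ℝ (Fin d × Fin d) :=
    (WithLp.equiv 2 _).symm (fun p => A p.1 p.2) with hv
  have hAsymm : ∀ i j, A j i = A i j := fun i j => by
    simpa using congrFun (congrFun hAt i) j
  have huv : (inner ℝ u v : ℝ) = N.trace := by
    rw [← hCA]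
    simp only [PiLp.inner_apply, RCLike.inner_apply, conj_trivial, hu, hv,
      WithLp.equiv_symm_apply, PiLp.toLp_apply, Matrix.trace, Matrix.diag, Matrix.mul_apply,
      Fintype.sum_prod_type]
    exact Finset.sum_congr rfl fun i _ => Finset.sum_congr rfl fun j _ => by rw [hAsymm, mul_comm]
  have hvv : (inner ℝ v v : ℝ) = S₁.trace := by
    rw [← hAsq]
    simp only [PiLp.inner_apply, RCLike.inner_apply, conj_trivial, hv,
      WithLp.equiv_symm_apply, PiLp.toLp_apply, Matrix.trace, Matrix.diag, Matrix.mul_apply,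
      Fintype.sum_prod_type]
    exact Finset.sum_congr rfl fun i _ => Finset.sum_congr rfl fun j _ => by rw [hAsymm]
  have huu : (inner ℝ u u : ℝ) = S₂.trace := by
    rw [← hCtC]
    simp only [PiLp.inner_apply, RCLike.inner_apply, conj_trivial, hu,
      WithLp.equiv_symm_apply, PiLp.toLp_apply, Matrix.trace, Matrix.diag, Matrix.mul_apply,
      Fintype.sum_prod_type, Matrix.transpose_apply]
    rw [Finset.sum_comm]
  have key : (S₁ + S₂ - (2 : ℝ) • msqrt (msqrt S₁ * S₂ * msqrt S₁)).trace
      = (inner ℝ (u - v) (u - v) : ℝ) := by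
    rw [hm2, real_inner_sub_sub_self, huu, huv, hvv, trace_sub, trace_add, trace_smul,
      smul_eq_mul]
    ring
  refine ⟨key ▸ real_inner_self_nonneg, ?_, ?_⟩
  · intro h
    rw [key] at h
    have huv0 : u = v := by rwa [inner_self_eq_zero, sub_eq_zero] at h
    have hCA' : C = A := by
      ext i j
      have := congrArg (· (i, j)) huv0
      simpa [hu, hv, WithLp.equiv_symm_apply, PiLp.toLp_apply] using this
    rw [← hAsq, ← hCtC, hCA', hAt]
  · intro h
    subst h
    have hNS : N = S₁ := by
      refine hN.eq_of_sq_eq_sq hS₁p ?_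
      rw [sq, sq, hNN, ← hAsq]
      noncomm_ring
    rw [hm2, hNS]
    have : S₁ + S₁ - (2 : ℝ) • S₁ = 0 := by
      rw [two_smul]; abel
    rw [this, trace_zero]
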